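/- For every n ≥ 1 and every subset I of {1,…,n}, the number of permutations σ of {1,…,n} with left-succession value set exactly I equals the number of permutations τ of {1,…,n} with fixed-point set exactly I. Here, with σ(0)=0, the left-succession value set is L̄(σ) = {σ(i) : 1 ≤ i ≤ n, σ(i-1)+1 = σ(i)}, and the fixed-point set of τ is F(τ) = {i : τ(i) = i}. -/

import Mathlib

open Finset
open Equiv

/-- The value `σ(i)` of a permutation of `{1,…,n}` at a one-based position `i`,
with the convention `σ(0) = 0` (and value `0` outside `[1,n]`). -/
def pv {n : ℕ} (σ : Equiv.Perm (Fin n)) (i : ℕ) : ℕ :=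
  if h : 1 ≤ i ∧ i ≤ n then ((σ ⟨i - 1, by omega⟩ : Fin n) : ℕ) + 1 else 0

/-- The left-succession value set: `L̄(σ) = {σ(i) : 1 ≤ i ≤ n, σ(i-1)+1 = σ(i)}` (with `σ(0)=0`). -/
def Lbar {n : ℕ} (σ : Equiv.Perm (Fin n)) : Finset ℕ :=
  ((Finset.Icc 1 n).filter (fun i => pv σ (i - 1) + 1 = pv σ i)).image (pv σ)

/-- The fixed-point set: `F(τ) = {1 ≤ i ≤ n : τ(i) = i}`. -/
def Fset {n : ℕ} (τ : Equiv.Perm (Fin n)) : Finset ℕ :=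
  (Finset.Icc 1 n).filter (fun i => pv τ i = i)

lemma pv_of_mem {n : ℕ} (σ : Equiv.Perm (Fin n)) {i : ℕ} (h1 : 1 ≤ i) (h2 : i ≤ n) :
    pv σ i = ((σ ⟨i - 1, by omega⟩ : Fin n) : ℕ) + 1 := dif_pos ⟨h1, h2⟩

lemma pv_zero {n : ℕ} (σ : Equiv.Perm (Fin n)) : pv σ 0 = 0 := dif_neg (by omega)

lemma pv_pos {n : ℕ} (σ : Equiv.Perm (Fin n)) {i : ℕ} (h1 : 1 ≤ i) (h2 : i ≤ n) :
    1 ≤ pv σ i ∧ pv σ i ≤ n := by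
  rw [pv_of_mem σ h1 h2]
  have := (σ ⟨i - 1, by omega⟩).isLt
  omega

lemma apply_val_iff {n : ℕ} (σ : Equiv.Perm (Fin n)) {a b : ℕ} (ha : a < n) (hb : b < n) :
    (σ ⟨a, ha⟩ : ℕ) = b ↔ (σ⁻¹ ⟨b, hb⟩ : ℕ) = a := by
  constructor
  · intro h
    have : σ ⟨a, ha⟩ = ⟨b, hb⟩ := Fin.ext h
    rw [← this]; simp
  · intro h
    have : σ⁻¹ ⟨b, hb⟩ = ⟨a, ha⟩ := Fin.ext h
    rw [← this]; simp

lemma mem_Lbar_iff {n : ℕ} (σ : Equiv.Perm (Fin n)) {v : ℕ} (h1 : 1 ≤ v) (h2 : v ≤ n) :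
    v ∈ Lbar σ ↔ pv σ⁻¹ v = pv σ⁻¹ (v - 1) + 1 := by
  have hvn : v - 1 < n := by omega
  constructor
  · rintro hv
    simp only [Lbar, mem_image, mem_filter, mem_Icc] at hv
    obtain ⟨i, ⟨⟨hi1, hi2⟩, hsucc⟩, hval⟩ := hv
    have hin : i - 1 < n := by omega
    have hpi : pv σ i = (σ ⟨i - 1, hin⟩ : ℕ) + 1 := pv_of_mem σ hi1 hi2
    have ha : (σ ⟨i - 1, hin⟩ : ℕ) = v - 1 := by omega
    have hinv : (σ⁻¹ ⟨v - 1, hvn⟩ : ℕ) = i - 1 := (apply_val_iff σ hin hvn).mp ha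
    have hMv : pv σ⁻¹ v = i := by
      rw [pv_of_mem σ⁻¹ h1 h2]
      have e : (⟨v - 1, by omega⟩ : Fin n) = ⟨v - 1, hvn⟩ := rfl
      rw [e, hinv]; omega
    rcases Nat.lt_or_ge i 2 with hi | hi
    · -- i = 1
      have h0 : i - 1 = 0 := by omega
      rw [h0, pv_zero] at hsucc
      have hv1 : v = 1 := by omega
      have : pv σ⁻¹ (v - 1) = 0 := by
        rw [show v - 1 = 0 by omega, pv_zero]
      omega
    · -- i ≥ 2
      have hin2 : i - 1 - 1 < n := by omega
      have hpi1 : pv σ (i - 1) = (σ ⟨i - 1 - 1, hin2⟩ : ℕ) + 1 :=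
        pv_of_mem σ (by omega) (by omega)
      have hv2 : 2 ≤ v := by omega
      have hb : (σ ⟨i - 1 - 1, hin2⟩ : ℕ) = v - 2 := by omega
      have hb' : (σ ⟨i - 1 - 1, hin2⟩ : ℕ) = v - 1 - 1 := by omega
      have hinv2 : (σ⁻¹ ⟨v - 1 - 1, by omega⟩ : ℕ) = i - 1 - 1 :=
        (apply_val_iff σ hin2 (by omega)).mp hb'
      have hMv1 : pv σ⁻¹ (v - 1) = i - 1 := by
        rw [pv_of_mem σ⁻¹ (by omega : 1 ≤ v - 1) (by omega)]
        rw [hinv2]; omega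
      omega
  · intro hM
    have hMv := pv_pos σ⁻¹ h1 h2
    have hpi : pv σ⁻¹ v = (σ⁻¹ ⟨v - 1, hvn⟩ : ℕ) + 1 := pv_of_mem σ⁻¹ h1 h2
    set i := pv σ⁻¹ v with hidef
    have hin : i - 1 < n := by omega
    have hinv : (σ⁻¹ ⟨v - 1, hvn⟩ : ℕ) = i - 1 := by omega
    have hσi : (σ ⟨i - 1, hin⟩ : ℕ) = v - 1 := (apply_val_iff σ hin hvn).mpr hinv
    have hpvi : pv σ i = v := by
      rw [pv_of_mem σ (by omega) (by omega)]
      rw [show (⟨i - 1, by omega⟩ : Fin n) = ⟨i - 1, hin⟩ from rfl, hσi]; omega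
    simp only [Lbar, mem_image, mem_filter, mem_Icc]
    refine ⟨i, ⟨⟨by omega, by omega⟩, ?_⟩, hpvi⟩
    rcases Nat.lt_or_ge v 2 with hv1 | hv2
    · -- v = 1
      have : pv σ⁻¹ (v - 1) = 0 := by rw [show v - 1 = 0 by omega, pv_zero]
      have hi1 : i = 1 := by omega
      rw [show i - 1 = 0 by omega, pv_zero, hpvi]
      omega
    · -- v ≥ 2
      have h3 : pv σ⁻¹ (v - 1) = (σ⁻¹ ⟨v - 1 - 1, by omega⟩ : ℕ) + 1 :=
        pv_of_mem σ⁻¹ (by omega) (by omega)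
      have hi2 : 2 ≤ i := by
        have := (σ⁻¹ ⟨v - 1 - 1, by omega⟩).isLt
        omega
      have hinv2 : (σ⁻¹ ⟨v - 1 - 1, by omega⟩ : ℕ) = i - 2 := by omega
      have hσ2 : (σ ⟨i - 2, by omega⟩ : ℕ) = v - 1 - 1 :=
        (apply_val_iff σ (by omega) (by omega)).mpr hinv2
      have hpvi1 : pv σ (i - 1) = v - 1 := by
        rw [pv_of_mem σ (by omega : 1 ≤ i - 1) (by omega)]
        rw [show (⟨i - 1 - 1, by omega⟩ : Fin n) = ⟨i - 2, by omega⟩ from Fin.ext (show i - 1 - 1 = i - 2 by omega), hσ2]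
        omega
      rw [hpvi1, hpvi]
      omega

lemma Lbar_subset {n : ℕ} (σ : Equiv.Perm (Fin n)) : Lbar σ ⊆ Finset.Icc 1 n := by
  intro v hv
  simp only [Lbar, mem_image, mem_filter, mem_Icc] at hv
  obtain ⟨i, ⟨⟨hi1, hi2⟩, _⟩, hval⟩ := hv
  have := pv_pos σ hi1 hi2
  simp only [mem_Icc]; omega

lemma Fset_subset {n : ℕ} (τ : Equiv.Perm (Fin n)) : Fset τ ⊆ Finset.Icc 1 n :=
  filter_subset _ _

lemma succAbove_val {n : ℕ} (t : Fin (n+1)) (y : Fin n) :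
    ((t.succAbove y : Fin (n+1)) : ℕ) = if (y : ℕ) < (t : ℕ) then (y : ℕ) else (y : ℕ) + 1 := by
  rw [Fin.succAbove]
  simp only [Fin.lt_def, Fin.coe_castSucc]
  split_ifs with h <;> simp

lemma finSuccEquiv'_ne {n : ℕ} {i x : Fin (n+1)} (h : x ≠ i) :
    ∃ y, finSuccEquiv' i x = some y := by
  rcases hx : finSuccEquiv' i x with _ | y
  · exact absurd ((finSuccEquiv' i).injective (hx.trans (finSuccEquiv'_at i).symm)) h
  · exact ⟨y, rfl⟩

/-- delete position `p` and value `σ p` from a permutation -/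
def Fmap {n : ℕ} (p : Fin (n+1)) (σ : Equiv.Perm (Fin (n+1))) : Equiv.Perm (Fin n) :=
  Equiv.removeNone ((finSuccEquiv' p).symm.trans (σ.trans (finSuccEquiv' (σ p))))

lemma Fmap_me {n : ℕ} (p : Fin (n+1)) (σ : Equiv.Perm (Fin (n+1))) (x : Fin n) :
    (σ p).succAbove (Fmap p σ x) = σ (p.succAbove x) := by
  have hne : σ (p.succAbove x) ≠ σ p := fun h => Fin.succAbove_ne p x (σ.injective h)
  obtain ⟨y, hy⟩ := finSuccEquiv'_ne hne
  have h1 : ((finSuccEquiv' p).symm.trans (σ.trans (finSuccEquiv' (σ p)))) (some x) = some y := by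
    simp only [Equiv.trans_apply, finSuccEquiv'_symm_some]
    exact hy
  have h2 := Equiv.removeNone_some _ ⟨y, h1⟩
  rw [h1] at h2
  have h3 : Fmap p σ x = y := Option.some_injective _ h2
  rw [h3]
  have := congrArg (finSuccEquiv' (σ p)).symm hy
  rw [Equiv.symm_apply_apply, finSuccEquiv'_symm_some] at this
  exact this.symm

/-- insert position `p` with value `c` into a permutation -/
def Gmap {n : ℕ} (p c : Fin (n+1)) (σ' : Equiv.Perm (Fin n)) : Equiv.Perm (Fin (n+1)) :=
  (finSuccEquiv' p).trans ((Equiv.optionCongr σ').trans (finSuccEquiv' c).symm)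

lemma Gmap_at {n : ℕ} (p c : Fin (n+1)) (σ' : Equiv.Perm (Fin n)) : Gmap p c σ' p = c := by
  simp [Gmap]

lemma Gmap_succAbove {n : ℕ} (p c : Fin (n+1)) (σ' : Equiv.Perm (Fin n)) (x : Fin n) :
    Gmap p c σ' (p.succAbove x) = c.succAbove (σ' x) := by
  simp [Gmap]

lemma Fmap_Gmap {n : ℕ} (p c : Fin (n+1)) (σ' : Equiv.Perm (Fin n)) :
    Fmap p (Gmap p c σ') = σ' := by
  ext x
  have h := Fmap_me p (Gmap p c σ') x
  rw [Gmap_succAbove, Gmap_at] at h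
  exact congrArg Fin.val (Fin.succAbove_right_injective h)

lemma Gmap_eq {n : ℕ} (p : Fin (n+1)) (σ : Equiv.Perm (Fin (n+1))) :
    Gmap p (σ p) (Fmap p σ) = σ := by
  apply Equiv.ext
  intro y
  rcases eq_or_ne y p with rfl | hy
  · rw [Gmap_at]
  · obtain ⟨x, rfl⟩ := Fin.exists_succAbove_eq hy
    rw [Gmap_succAbove, Fmap_me]

/-- the value to insert at position `p`, recovered from the small permutation -/
def cval {n : ℕ} (p : Fin (n+1)) (σ' : Equiv.Perm (Fin n)) : Fin (n+1) :=
  if h : (p : ℕ) = 0 then ⟨0, by omega⟩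
  else ⟨(σ' ⟨(p : ℕ) - 1, by have := p.isLt; omega⟩ : ℕ) + 1,
    by have := (σ' ⟨(p : ℕ) - 1, by have := p.isLt; omega⟩).isLt; omega⟩

lemma cval_zero {n : ℕ} (p : Fin (n+1)) (σ' : Equiv.Perm (Fin n)) (h : (p : ℕ) = 0) :
    (cval p σ' : ℕ) = 0 := by rw [cval, dif_pos h]

lemma cval_pos {n : ℕ} (p : Fin (n+1)) (σ' : Equiv.Perm (Fin n)) (q : Fin n)
    (hq : (q : ℕ) = (p : ℕ) - 1) (h : (p : ℕ) ≠ 0) :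
    (cval p σ' : ℕ) = (σ' q : ℕ) + 1 := by
  rw [cval, dif_neg h]
  have hfq : (⟨(p : ℕ) - 1, by have := p.isLt; omega⟩ : Fin n) = q :=
    Fin.ext (show (p : ℕ) - 1 = (q : ℕ) by omega)
  exact congrArg (fun t => (σ' t : ℕ) + 1) hfq

lemma pv_eq {n : ℕ} (σ : Equiv.Perm (Fin n)) {i : ℕ} (x : Fin n)
    (h1 : 1 ≤ i) (h2 : i ≤ n) (hx : (x : ℕ) = i - 1) :
    pv σ i = (σ x : ℕ) + 1 := by
  rw [pv_of_mem σ h1 h2]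
  have hfx : (⟨i - 1, by omega⟩ : Fin n) = x := Fin.ext (show i - 1 = (x : ℕ) by omega)
  rw [hfx]

/-- value of `Gmap` at a one-based position `w ≤ p`. -/
lemma pv_Gmap {n : ℕ} (p c : Fin (n+1)) (σ' : Equiv.Perm (Fin n)) {w : ℕ} (x : Fin n)
    (h1 : 1 ≤ w) (hw : w ≤ (p : ℕ)) (hx : (x : ℕ) = w - 1) :
    pv (Gmap p c σ') w =
      (if ((σ' x : Fin n) : ℕ) < (c : ℕ) then ((σ' x : Fin n) : ℕ)
       else ((σ' x : Fin n) : ℕ) + 1) + 1 := by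
  have hpn : (p : ℕ) ≤ n := by have := p.isLt; omega
  rw [pv_of_mem _ h1 (by omega)]
  have hpos : (⟨w - 1, by omega⟩ : Fin (n+1)) = p.succAbove x := by
    apply Fin.ext
    rw [succAbove_val]
    simp only [hx, if_pos (show w - 1 < (p : ℕ) by omega)]
  rw [hpos, Gmap_succAbove, succAbove_val]

/-- value of `Gmap` at position `p` (one-based `p+1`). -/
lemma pv_Gmap_at {n : ℕ} (p c : Fin (n+1)) (σ' : Equiv.Perm (Fin n)) :
    pv (Gmap p c σ') ((p : ℕ) + 1) = (c : ℕ) + 1 := by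
  have := p.isLt
  rw [pv_of_mem _ (by omega) (by omega)]
  have hpos : (⟨(p : ℕ) + 1 - 1, by omega⟩ : Fin (n+1)) = p := by
    apply Fin.ext; simp
  rw [hpos, Gmap_at]

/-- the inserted permutation satisfies the succession condition at position `p` -/
lemma Gmap_cond_at {n : ℕ} (p : Fin (n+1)) (σ' : Equiv.Perm (Fin n)) :
    pv (Gmap p (cval p σ') σ') ((p : ℕ) + 1) = pv (Gmap p (cval p σ') σ') ((p : ℕ)) + 1 := by
  rcases Nat.eq_zero_or_pos (p : ℕ) with hp | hp
  · rw [pv_Gmap_at, cval_zero _ _ hp, hp, pv_zero]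
  · have hpn : (p : ℕ) ≤ n := by have := p.isLt; omega
    have hqn : (p : ℕ) - 1 < n := by omega
    set q : Fin n := ⟨(p : ℕ) - 1, hqn⟩ with hqdef
    have hc : (cval p σ' : ℕ) = (σ' q : ℕ) + 1 := cval_pos p σ' q rfl (by omega)
    rw [pv_Gmap_at, pv_Gmap p (cval p σ') σ' q (by omega) (le_refl _) rfl]
    rw [if_pos (by omega)]
    omega

/-- succession conditions at one-based positions `w ≤ p` transfer along `Gmap` -/
lemma Gmap_transfer {n : ℕ} (p : Fin (n+1)) (σ' : Equiv.Perm (Fin n))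
    (hp : 1 ≤ (p : ℕ)) {w : ℕ} (h1 : 1 ≤ w) (hw : w ≤ (p : ℕ)) :
    (pv (Gmap p (cval p σ') σ') w = pv (Gmap p (cval p σ') σ') (w - 1) + 1 ↔
      pv σ' w = pv σ' (w - 1) + 1) := by
  have hpn : (p : ℕ) ≤ n := by have := p.isLt; omega
  have hqn : (p : ℕ) - 1 < n := by omega
  set q : Fin n := ⟨(p : ℕ) - 1, hqn⟩ with hqdef
  have hc : (cval p σ' : ℕ) = (σ' q : ℕ) + 1 := cval_pos p σ' q rfl (by omega)
  rcases Nat.lt_or_ge w 2 with hw2 | hw2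
  · -- w = 1
    have hw1 : w = 1 := by omega
    subst hw1
    have hb : (⟨0, by omega⟩ : Fin n) = (⟨1 - 1, by omega⟩ : Fin n) := rfl
    rw [pv_Gmap p (cval p σ') σ' ⟨0, by omega⟩ le_rfl hw rfl,
      pv_eq σ' ⟨0, by omega⟩ le_rfl (by omega) rfl]
    simp only [Nat.sub_self, pv_zero]
    split_ifs with h <;> omega
  · -- w ≥ 2
    have hx1n : w - 1 - 1 < n := by omega
    have hx2n : w - 1 < n := by omega
    set x1 : Fin n := ⟨w - 1 - 1, hx1n⟩ with hx1def
    set x2 : Fin n := ⟨w - 1, hx2n⟩ with hx2def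
    have hab : (σ' x1 : ℕ) ≠ (σ' x2 : ℕ) := by
      intro h
      have := σ'.injective (Fin.ext h)
      have := congrArg Fin.val this
      simp only [hx1def, hx2def] at this
      omega
    have haq : (σ' x1 : ℕ) ≠ (σ' q : ℕ) := by
      intro h
      have := σ'.injective (Fin.ext h)
      have := congrArg Fin.val this
      simp only [hx1def, hqdef] at this
      omega
    rw [pv_Gmap p (cval p σ') σ' x2 h1 hw rfl,
      pv_Gmap p (cval p σ') σ' x1 (by omega) (by omega) rfl,
      pv_eq σ' x2 h1 (by omega) rfl, pv_eq σ' x1 (by omega) (by omega) rfl]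
    split_ifs with h h' h' <;> omega

lemma cval_Fmap {n : ℕ} (p : Fin (n+1)) (σ : Equiv.Perm (Fin (n+1)))
    (hσ : pv σ ((p : ℕ) + 1) = pv σ ((p : ℕ)) + 1) :
    cval p (Fmap p σ) = σ p := by
  have hpn : (p : ℕ) ≤ n := by have := p.isLt; omega
  have hply : pv σ ((p : ℕ) + 1) = (σ p : ℕ) + 1 := by
    rw [pv_eq σ p (by omega) (by omega) (by omega)]
  rcases Nat.eq_zero_or_pos (p : ℕ) with hp | hp
  · -- p = 0 : value is 0
    have h0 : pv σ ((p : ℕ)) = 0 := by rw [hp, pv_zero]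
    have : (σ p : ℕ) = 0 := by omega
    apply Fin.ext
    rw [cval_zero _ _ hp, this]
  · have hqn : (p : ℕ) - 1 < n := by omega
    set q : Fin n := ⟨(p : ℕ) - 1, hqn⟩ with hqdef
    have hpm : pv σ ((p : ℕ)) = (σ ⟨(p : ℕ) - 1, by omega⟩ : ℕ) + 1 :=
      pv_eq σ _ (by omega) (by omega) rfl
    -- master equation at q
    have hme := Fmap_me p σ q
    have hpq : p.succAbove q = ⟨(p : ℕ) - 1, by omega⟩ := by
      apply Fin.ext
      rw [succAbove_val]
      simp only [hqdef, if_pos (show (p : ℕ) - 1 < (p : ℕ) by omega)]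
    rw [hpq] at hme
    have hmev := congrArg Fin.val hme
    rw [succAbove_val] at hmev
    have hF : (Fmap p σ q : ℕ) = (σ p : ℕ) - 1 := by
      split_ifs at hmev <;> omega
    apply Fin.ext
    rw [cval_pos p (Fmap p σ) q rfl (by omega), hF]
    omega

/-- The key deletion step: removing the largest constrained position. -/
lemma key_step {n : ℕ} (I : Finset ℕ) (hI : I ⊆ Finset.Icc 1 (n+1)) (v : ℕ) (hv : v ∈ I)
    (hmax : ∀ w ∈ I, w ≤ v) :
    ((univ : Finset (Equiv.Perm (Fin (n+1)))).filter
        (fun σ => ∀ w ∈ I, pv σ w = pv σ (w - 1) + 1)).card =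
    ((univ : Finset (Equiv.Perm (Fin n))).filter
        (fun σ' => ∀ w ∈ I.erase v, pv σ' w = pv σ' (w - 1) + 1)).card := by
  have hv12 : 1 ≤ v ∧ v ≤ n + 1 := by
    have := hI hv
    simpa [mem_Icc] using this
  set p : Fin (n+1) := ⟨v - 1, by omega⟩ with hpdef
  have hpv : (p : ℕ) = v - 1 := rfl
  apply Finset.card_bij' (fun σ _ => Fmap p σ) (fun σ' _ => Gmap p (cval p σ') σ')
  · -- Fmap lands in the small set
    intro σ hσ
    simp only [mem_filter, mem_univ, true_and] at hσ ⊢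
    have hcv : cval p (Fmap p σ) = σ p := by
      apply cval_Fmap
      have := hσ v hv
      rw [show (p : ℕ) + 1 = v by omega, show (p : ℕ) = v - 1 from rfl]
      exact this
    have hGσ : Gmap p (cval p (Fmap p σ)) (Fmap p σ) = σ := by
      rw [hcv]; exact Gmap_eq p σ
    intro w hw
    have hwI := Finset.mem_of_mem_erase hw
    have hwv : w ≠ v := Finset.ne_of_mem_erase hw
    have hw1 : 1 ≤ w ∧ w ≤ n + 1 := by
      have := hI hwI
      simpa [mem_Icc] using this
    have hwle : w ≤ (p : ℕ) := by
      have := hmax w hwI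
      omega
    have htr := Gmap_transfer p (Fmap p σ) (by omega) hw1.1 hwle
    rw [hGσ] at htr
    exact htr.mp (hσ w hwI)
  · -- Gmap lands in the big set
    intro σ' hσ'
    simp only [mem_filter, mem_univ, true_and] at hσ' ⊢
    intro w hw
    have hw1 : 1 ≤ w ∧ w ≤ n + 1 := by
      have := hI hw
      simpa [mem_Icc] using this
    rcases eq_or_ne w v with rfl | hwv
    · have := Gmap_cond_at p σ'
      rw [show (p : ℕ) + 1 = w by omega, show (p : ℕ) = w - 1 by omega] at this
      exact this
    · have hwle : w ≤ (p : ℕ) := by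
        have := hmax w hw
        omega
      exact (Gmap_transfer p σ' (by omega) hw1.1 hwle).mpr
        (hσ' w (Finset.mem_erase.mpr ⟨hwv, hw⟩))
  · -- left inverse
    intro σ hσ
    simp only [mem_filter, mem_univ, true_and] at hσ
    have hcv : cval p (Fmap p σ) = σ p := by
      apply cval_Fmap
      have := hσ v hv
      rw [show (p : ℕ) + 1 = v by omega, show (p : ℕ) = v - 1 from rfl]
      exact this
    rw [hcv]
    exact Gmap_eq p σ
  · -- right inverse
    intro σ' _
    exact Fmap_Gmap p (cval p σ') σ'

lemma good_count : ∀ (k n : ℕ) (I : Finset ℕ), I.card = k → I ⊆ Finset.Icc 1 n →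
    ((univ : Finset (Equiv.Perm (Fin n))).filter
      (fun σ => ∀ w ∈ I, pv σ w = pv σ (w - 1) + 1)).card = Nat.factorial (n - k) := by
  intro k
  induction k with
  | zero =>
    intro n I hcard _
    have : I = ∅ := Finset.card_eq_zero.mp hcard
    subst this
    rw [Finset.filter_true_of_mem (fun σ _ => by simp)]
    simp [Finset.card_univ, Nat.sub_zero, Fintype.card_perm, Fintype.card_fin]
  | succ k ih =>
    intro n I hcard hI
    have hne : I.Nonempty := Finset.card_pos.mp (by omega)
    set v := I.max' hne with hvdef
    have hv : v ∈ I := I.max'_mem hne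
    have hmax : ∀ w ∈ I, w ≤ v := fun w hw => I.le_max' w hw
    have hv12 : 1 ≤ v ∧ v ≤ n := by
      have := hI hv
      simpa [mem_Icc] using this
    cases n with
    | zero => omega
    | succ m =>
      rw [key_step I hI v hv hmax]
      rw [ih m (I.erase v) (by rw [Finset.card_erase_of_mem hv]; omega) ?hsub]
      · congr 1
        omega
      · intro w hw
        have hwI := Finset.mem_of_mem_erase hw
        have hwv : w ≠ v := Finset.ne_of_mem_erase hw
        have := hI hwI
        have hmw := hmax w hwI
        simp only [mem_Icc] at this ⊢
        omega

lemma fix_count (n : ℕ) (I : Finset ℕ) (hI : I ⊆ Finset.Icc 1 n) :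
    ((univ : Finset (Equiv.Perm (Fin n))).filter
      (fun τ => ∀ w ∈ I, pv τ w = w)).card = Nat.factorial (n - I.card) := by
  have hiff : ∀ τ : Equiv.Perm (Fin n),
      (∀ w ∈ I, pv τ w = w) ↔ (∀ a : Fin n, ((a : ℕ) + 1 ∈ I) → τ a = a) := by
    intro τ
    constructor
    · intro h a ha
      have hb : 1 ≤ (a : ℕ) + 1 ∧ (a : ℕ) + 1 ≤ n := by
        have := hI ha
        simpa [mem_Icc] using this
      have hw := h _ ha
      rw [pv_eq τ a (by omega) (by omega) (by omega)] at hw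
      exact Fin.ext (by omega)
    · intro h w hw
      have hb : 1 ≤ w ∧ w ≤ n := by
        have := hI hw
        simpa [mem_Icc] using this
      have hwn : w - 1 < n := by omega
      set x0 : Fin n := ⟨w - 1, hwn⟩ with hx0
      have hx0v : (x0 : ℕ) = w - 1 := rfl
      have hx : (x0 : ℕ) + 1 ∈ I := by
        rw [hx0v, show w - 1 + 1 = w by omega]
        exact hw
      have hτ := h x0 hx
      rw [pv_eq τ x0 (by omega) (by omega) hx0v, hτ, hx0v]
      omega
  rw [Finset.filter_congr (fun τ _ => by rw [hiff τ])]
  rw [← Fintype.card_subtype]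
  have e1 : {τ : Equiv.Perm (Fin n) // ∀ a : Fin n, ((a : ℕ) + 1 ∈ I) → τ a = a} ≃
      {τ : Equiv.Perm (Fin n) // ∀ a : Fin n, ¬((a : ℕ) + 1 ∉ I) → τ a = a} :=
    Equiv.subtypeEquivRight (fun τ => by
      constructor
      · intro h a ha
        exact h a (not_not.mp ha)
      · intro h a ha
        exact h a (not_not.mpr ha))
  rw [Fintype.card_congr e1]
  rw [Fintype.card_congr (Equiv.Perm.subtypeEquivSubtypePerm
    (fun a : Fin n => (a : ℕ) + 1 ∉ I)).symm]
  rw [Fintype.card_perm]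
  congr 1
  rw [Fintype.card_subtype]
  have hpos : ((univ : Finset (Fin n)).filter (fun a : Fin n => (a : ℕ) + 1 ∈ I)).card
      = I.card := by
    refine Finset.card_bij (fun (a : Fin n) (_ : a ∈ (univ : Finset (Fin n)).filter
      (fun a : Fin n => (a : ℕ) + 1 ∈ I)) => (a : ℕ) + 1) ?_ ?_ ?_
    · intro a ha
      simp only [mem_filter] at ha
      exact ha.2
    · intro a _ b _ hab
      exact Fin.ext (by omega)
    · intro w hw
      have hb : 1 ≤ w ∧ w ≤ n := by
        have := hI hw
        simpa [mem_Icc] using this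
      have hwn : w - 1 < n := by omega
      refine ⟨⟨w - 1, hwn⟩, ?_, show w - 1 + 1 = w by omega⟩
      simp only [mem_filter, mem_univ, true_and]
      show w - 1 + 1 ∈ I
      rw [show w - 1 + 1 = w by omega]
      exact hw
  have htot := Finset.card_filter_add_card_filter_not
    (s := (univ : Finset (Fin n))) (fun a : Fin n => (a : ℕ) + 1 ∈ I)
  rw [Finset.card_univ, Fintype.card_fin, hpos] at htot
  have hIn : I.card ≤ n := by
    calc I.card ≤ (Finset.Icc 1 n).card := Finset.card_le_card hI
    _ = n := by rw [Nat.card_Icc]; omega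
  omega

lemma partition_count {α : Type*} [Fintype α] [DecidableEq α] (S : α → Finset ℕ)
    (U : Finset ℕ) (hS : ∀ x, S x ⊆ U) (I : Finset ℕ) :
    ((univ : Finset α).filter (fun x => I ⊆ S x)).card
      = ∑ J ∈ U.powerset.filter (fun J => I ⊆ J),
          ((univ : Finset α).filter (fun x => S x = J)).card := by
  rw [Finset.card_eq_sum_card_fiberwise
    (f := S) (t := U.powerset.filter (fun J => I ⊆ J))
    (fun x hx => by
      simp only [coe_filter, mem_filter, mem_univ, true_and, Set.mem_setOf_eq] at hx
      simp only [coe_filter, mem_filter, mem_powerset, Set.mem_setOf_eq]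
      exact ⟨hS x, hx⟩)]
  apply Finset.sum_congr rfl
  intro J hJ
  simp only [mem_filter, mem_powerset] at hJ
  rw [Finset.filter_filter]
  congr 1
  apply Finset.filter_congr
  intro x _
  constructor
  · exact fun h => h.2
  · intro h
    exact ⟨h ▸ hJ.2, h⟩

lemma invert {α β : Type*} [Fintype α] [Fintype β] [DecidableEq α] [DecidableEq β]
    (S : α → Finset ℕ) (T : β → Finset ℕ) (U : Finset ℕ)
    (hS : ∀ x, S x ⊆ U) (hT : ∀ y, T y ⊆ U)
    (hAB : ∀ I, I ⊆ U →
      ((univ : Finset α).filter (fun x => I ⊆ S x)).card =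
      ((univ : Finset β).filter (fun y => I ⊆ T y)).card) :
    ∀ (k : ℕ) (I : Finset ℕ), I ⊆ U → U.card - I.card ≤ k →
      ((univ : Finset α).filter (fun x => S x = I)).card =
      ((univ : Finset β).filter (fun y => T y = I)).card := by
  intro k
  induction k with
  | zero =>
    intro I hIU hk
    have hcard : U.card ≤ I.card := by omega
    have hIU' : I = U := Finset.eq_of_subset_of_card_le hIU hcard
    subst hIU'
    have ht : I.powerset.filter (fun J => I ⊆ J) = {I} := by
      ext J
      simp only [mem_filter, mem_powerset, mem_singleton]
      constructor
      · rintro ⟨h1, h2⟩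
        exact Finset.Subset.antisymm h1 h2
      · rintro rfl
        exact ⟨Finset.Subset.refl _, Finset.Subset.refl _⟩
    have h1 := partition_count S I hS I
    have h2 := partition_count T I hT I
    rw [ht, Finset.sum_singleton] at h1 h2
    rw [← h1, ← h2]
    exact hAB I hIU
  | succ k ih =>
    intro I hIU hk
    have hIt : I ∈ U.powerset.filter (fun J => I ⊆ J) := by
      simp only [mem_filter, mem_powerset]
      exact ⟨hIU, Finset.Subset.refl _⟩
    have h1 := partition_count S U hS I
    have h2 := partition_count T U hT I
    rw [← Finset.add_sum_erase _ _ hIt] at h1 h2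
    have hsum : ∑ J ∈ (U.powerset.filter (fun J => I ⊆ J)).erase I,
          ((univ : Finset α).filter (fun x => S x = J)).card
        = ∑ J ∈ (U.powerset.filter (fun J => I ⊆ J)).erase I,
          ((univ : Finset β).filter (fun y => T y = J)).card := by
      apply Finset.sum_congr rfl
      intro J hJ
      have hJI : J ≠ I := Finset.ne_of_mem_erase hJ
      have hJ' := Finset.mem_of_mem_erase hJ
      simp only [mem_filter, mem_powerset] at hJ'
      have hss : I ⊂ J := Finset.ssubset_iff_subset_ne.mpr ⟨hJ'.2, hJI.symm⟩
      have hlt : I.card < J.card := Finset.card_lt_card hss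
      have hJU : J.card ≤ U.card := Finset.card_le_card hJ'.1
      exact ih J hJ'.1 (by omega)
    have hab := hAB I hIU
    omega

lemma Lbar_sup_count (n : ℕ) (I : Finset ℕ) (hI : I ⊆ Finset.Icc 1 n) :
    ((univ : Finset (Equiv.Perm (Fin n))).filter (fun σ => I ⊆ Lbar σ)).card
      = Nat.factorial (n - I.card) := by
  have h1 : ((univ : Finset (Equiv.Perm (Fin n))).filter (fun σ => I ⊆ Lbar σ))
      = ((univ : Finset (Equiv.Perm (Fin n))).filter
          (fun σ => ∀ w ∈ I, pv σ⁻¹ w = pv σ⁻¹ (w - 1) + 1)) := by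
    apply Finset.filter_congr
    intro σ _
    constructor
    · intro h w hw
      have hb : 1 ≤ w ∧ w ≤ n := by
        have := hI hw
        simpa [mem_Icc] using this
      exact (mem_Lbar_iff σ hb.1 hb.2).mp (h hw)
    · intro h w hw
      have hb : 1 ≤ w ∧ w ≤ n := by
        have := hI hw
        simpa [mem_Icc] using this
      exact (mem_Lbar_iff σ hb.1 hb.2).mpr (h w hw)
  rw [h1]
  rw [← good_count I.card n I rfl hI]
  refine Finset.card_bij' (fun σ _ => σ⁻¹) (fun σ _ => σ⁻¹) ?_ ?_ ?_ ?_
  · intro σ hσ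
    simp only [mem_filter, mem_univ, true_and] at hσ ⊢
    exact hσ
  · intro σ hσ
    simp only [mem_filter, mem_univ, true_and, inv_inv] at hσ ⊢
    exact hσ
  · intro σ _
    simp only [inv_inv]
  · intro σ _
    simp only [inv_inv]

lemma Fset_sup_count (n : ℕ) (I : Finset ℕ) (hI : I ⊆ Finset.Icc 1 n) :
    ((univ : Finset (Equiv.Perm (Fin n))).filter (fun τ => I ⊆ Fset τ)).card
      = Nat.factorial (n - I.card) := by
  rw [← fix_count n I hI]
  congr 1
  apply Finset.filter_congr
  intro τ _
  constructor
  · intro h w hw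
    have := h hw
    simp only [Fset, mem_filter] at this
    exact this.2
  · intro h w hw
    simp only [Fset, mem_filter]
    exact ⟨hI hw, h w hw⟩


/-- Left-succession analogue of the Diaconis–Evans–Graham theorem. -/
theorem lsuc_deg (n : ℕ) (hn : 1 ≤ n) (I : Finset ℕ) (hI : I ⊆ Finset.Icc 1 n) :
    ((Finset.univ : Finset (Equiv.Perm (Fin n))).filter (fun σ => Lbar σ = I)).card =
    ((Finset.univ : Finset (Equiv.Perm (Fin n))).filter (fun τ => Fset τ = I)).card := by
  exact invert Lbar Fset (Finset.Icc 1 n) Lbar_subset Fset_subset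
    (fun J hJ => by rw [Lbar_sup_count n J hJ, Fset_sup_count n J hJ])
    ((Finset.Icc 1 n).card) I hI (by omega)
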